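/- arXiv:2401.03073 — 3 statements merged into one kernel-verified Lean document; each statement's English description precedes it below -/
import Mathlib

section
/- For every p ∈ W one has ‖Π(p)‖_{T⁻¹} = ‖p‖_{T⁻¹}, i.e. the exchange operator Π is unitary with respect to the T⁻¹-inner product. -/
noncomputable section
open scoped InnerProductSpace
open LinearMap

variable {V W : Type*}
  [NormedAddCommGroup V] [InnerProductSpace ℂ V] [FiniteDimensional ℂ V]
  [NormedAddCommGroup W] [InnerProductSpace ℂ W] [FiniteDimensional ℂ W]

/-- The norm `‖p‖_{T⁻¹} := ⟨T⁻¹p, p⟩^{1/2}` induced on `W` by the inverse of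
the self-adjoint positive definite operator `T`. -/
def tinvNorm (T : W →ₗ[ℂ] W) [Invertible T] (p : W) : ℝ :=
  Real.sqrt (⟪(⅟T) p, p⟫_ℂ).re

/-- The operator `R*TR : V → V`. -/
def rtrOp (T : W →ₗ[ℂ] W) (R : V →ₗ[ℂ] W) : V →ₗ[ℂ] V :=
  adjoint R ∘ₗ T ∘ₗ R

/-- The exchange operator `Π := 2TR(R*TR)⁻¹R* − Id : W → W`. -/
def exchangeOp (T : W →ₗ[ℂ] W) (R : V →ₗ[ℂ] W) [Invertible (rtrOp T R)] : W →ₗ[ℂ] W :=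
  (2 : ℂ) • (T ∘ₗ R ∘ₗ ⅟(rtrOp T R) ∘ₗ adjoint R) - LinearMap.id

/-- the exchange operator `Π` is unitary with respect to the
`T⁻¹`-inner product: `‖Π(p)‖_{T⁻¹} = ‖p‖_{T⁻¹}` for every `p ∈ W`. -/
theorem exchangeOp_unitary
    (T : W →ₗ[ℂ] W) [Invertible T]
    (hTsa : adjoint T = T)
    (hTpos : ∀ w : W, w ≠ 0 → 0 < (⟪T w, w⟫_ℂ).re)
    (R : V →ₗ[ℂ] W) (hR : Function.Injective R)
    [Invertible (rtrOp T R)] :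
    ∀ p : W, tinvNorm T (exchangeOp T R p) = tinvNorm T p := by
  intro p
  set q : V := adjoint R p with hq
  set x : V := (⅟(rtrOp T R)) q with hx
  set a : ℂ := ⟪x, q⟫_ℂ with ha
  have hTT : ∀ w : W, (⅟T) (T w) = w := by
    intro w
    rw [← Module.End.mul_apply, invOf_mul_self, Module.End.one_apply]
  have hrtr : rtrOp T R x = q := by
    rw [hx, ← Module.End.mul_apply, mul_invOf_self, Module.End.one_apply]
  have hPi : exchangeOp T R p = (2:ℂ) • T (R x) - p := by
    simp [exchangeOp, LinearMap.sub_apply, LinearMap.smul_apply, LinearMap.comp_apply,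
      hx, hq]
  have hinv : (⅟T) (exchangeOp T R p) = (2:ℂ) • R x - (⅟T) p := by
    rw [hPi, map_sub, map_smul, hTT]
  have h1 : ⟪R x, T (R x)⟫_ℂ = a := by
    rw [← adjoint_inner_right R]
    have : adjoint R (T (R x)) = q := by
      have : rtrOp T R x = q := hrtr
      simpa [rtrOp, LinearMap.comp_apply] using this
    rw [this]
  have h2 : ⟪R x, p⟫_ℂ = a := by
    rw [← adjoint_inner_right R, ← hq]
  have h3 : ⟪(⅟T) p, T (R x)⟫_ℂ = (starRingEnd ℂ) a := by
    have hTT' : T ((⅟T) p) = p := by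
      rw [← Module.End.mul_apply, mul_invOf_self, Module.End.one_apply]
    rw [← adjoint_inner_left T, hTsa, hTT', ← inner_conj_symm, h2]
  have key : (⟪(⅟T) (exchangeOp T R p), exchangeOp T R p⟫_ℂ).re = (⟪(⅟T) p, p⟫_ℂ).re := by
    rw [hinv, hPi]
    rw [inner_sub_left, inner_sub_right, inner_sub_right]
    simp only [inner_smul_left, inner_smul_right, h1, h2, h3]
    simp [Complex.sub_re, Complex.mul_re]
    ring
  unfold tinvNorm
  rw [key]
end
end

section
/- For every α ∈ (0,1) and every q ∈ H one has ‖((1−α)Id − αU)q‖² ≤ (1 − α(1−α)γ²)‖q‖²; in particular the operator (1−α)Id − αU is a strict contraction whenever γ > 0. -/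
noncomputable section
open scoped InnerProductSpace
open LinearMap

/-- `γ := inf_{q ≠ 0} ‖(Id+U)q‖ / ‖q‖`. -/
def gammaInf {H : Type*} [NormedAddCommGroup H] [InnerProductSpace ℂ H]
    (U : H →ₗ[ℂ] H) : ℝ :=
  ⨅ q : {q : H // q ≠ 0}, ‖(q : H) + U (q : H)‖ / ‖(q : H)‖


lemma key_relax_identity {H : Type*} [NormedAddCommGroup H] [InnerProductSpace ℂ H]
    (α : ℝ) (q u : H) :
    ‖(1 - α) • q - α • u‖ ^ 2 =
      (1 - α) * ‖q‖ ^ 2 + α * ‖u‖ ^ 2 - α * (1 - α) * ‖q + u‖ ^ 2 := by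
  have h1 := @norm_sub_sq ℂ _ _ _ _ ((1 - α) • q) (α • u)
  have h2 := @norm_add_sq ℂ _ _ _ _ q u
  have h3 : ⟪(1 - α) • q, α • u⟫_ℂ = ((1 - α : ℝ) : ℂ) * (α : ℝ) * ⟪q, u⟫_ℂ := by
    rw [RCLike.real_smul_eq_coe_smul (K := ℂ) (1 - α) q,
        RCLike.real_smul_eq_coe_smul (K := ℂ) α u,
        inner_smul_left, inner_smul_right]
    simp [RCLike.conj_ofReal]; ring
  rw [h3] at h1
  have h4 : RCLike.re (((1 - α : ℝ) : ℂ) * (α : ℝ) * ⟪q, u⟫_ℂ) =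
      (1 - α) * α * RCLike.re ⟪q, u⟫_ℂ := by
    simp [RCLike.mul_re]
  rw [h4] at h1
  rw [norm_smul, norm_smul] at h1
  rw [h1, h2]
  simp [Real.norm_eq_abs, mul_pow, sq_abs]
  ring

lemma gammaInf_nonneg {H : Type*} [NormedAddCommGroup H] [InnerProductSpace ℂ H]
    (U : H →ₗ[ℂ] H) : 0 ≤ gammaInf U := by
  by_cases h : Nonempty {q : H // q ≠ 0}
  · exact le_ciInf fun q => div_nonneg (norm_nonneg _) (norm_nonneg _)
  · rw [gammaInf, @Real.iInf_of_isEmpty _ (not_nonempty_iff.mp h)]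

lemma gammaInf_le {H : Type*} [NormedAddCommGroup H] [InnerProductSpace ℂ H]
    (U : H →ₗ[ℂ] H) (q : H) : gammaInf U * ‖q‖ ≤ ‖q + U q‖ := by
  by_cases hq : q = 0
  · simp [hq, gammaInf_nonneg U]
  · have h : gammaInf U ≤ ‖q + U q‖ / ‖q‖ := by
      refine ciInf_le ⟨0, fun x hx => ?_⟩ (⟨q, hq⟩ : {q : H // q ≠ 0})
      obtain ⟨p, rfl⟩ := hx
      exact div_nonneg (norm_nonneg _) (norm_nonneg _)
    have hq' : (0:ℝ) < ‖q‖ := norm_pos_iff.mpr hq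
    calc gammaInf U * ‖q‖ ≤ (‖q + U q‖ / ‖q‖) * ‖q‖ := by
          exact mul_le_mul_of_nonneg_right h hq'.le
      _ = ‖q + U q‖ := by field_simp

/-- if `U` is a contraction then for every `α ∈ (0,1)` and every `q`,
`‖((1−α)Id − αU)q‖² ≤ (1 − α(1−α)γ²)‖q‖²`; in particular `(1−α)Id − αU` is a
strict contraction whenever `γ > 0`. -/
theorem relaxed_operator_contraction
    {H : Type*} [NormedAddCommGroup H] [InnerProductSpace ℂ H] [FiniteDimensional ℂ H]
    (U : H →ₗ[ℂ] H) (hU : ∀ q : H, ‖U q‖ ≤ ‖q‖) :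
    ∀ α ∈ Set.Ioo (0 : ℝ) 1, ∀ q : H,
      (‖(1 - α) • q - α • U q‖ ^ 2 ≤ (1 - α * (1 - α) * (gammaInf U) ^ 2) * ‖q‖ ^ 2) ∧
      (0 < gammaInf U → q ≠ 0 → ‖(1 - α) • q - α • U q‖ < ‖q‖) := by
  intro α hα q
  obtain ⟨hα0, hα1⟩ := hα
  have hkey := key_relax_identity α q (U q)
  have hγ0 := gammaInf_nonneg U
  have hγle := gammaInf_le U q
  have hUq := hU q
  have hsq : (gammaInf U * ‖q‖) ^ 2 ≤ ‖q + U q‖ ^ 2 :=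
    pow_le_pow_left₀ (by positivity) hγle 2
  have main : ‖(1 - α) • q - α • U q‖ ^ 2 ≤ (1 - α * (1 - α) * (gammaInf U) ^ 2) * ‖q‖ ^ 2 := by
    rw [hkey]
    have h1 : ‖U q‖ ^ 2 ≤ ‖q‖ ^ 2 := pow_le_pow_left₀ (norm_nonneg _) hUq 2
    have h2 : α * (1 - α) * ((gammaInf U * ‖q‖) ^ 2) ≤ α * (1 - α) * ‖q + U q‖ ^ 2 :=
      mul_le_mul_of_nonneg_left hsq (by nlinarith)
    rw [mul_pow] at h2
    nlinarith
  refine ⟨main, fun hγ hq => ?_⟩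
  have hqpos : (0:ℝ) < ‖q‖ := norm_pos_iff.mpr hq
  have : ‖(1 - α) • q - α • U q‖ ^ 2 < ‖q‖ ^ 2 := by
    calc ‖(1 - α) • q - α • U q‖ ^ 2 ≤ (1 - α * (1 - α) * (gammaInf U) ^ 2) * ‖q‖ ^ 2 := main
      _ < ‖q‖ ^ 2 := by
          have : 0 < α * (1 - α) * gammaInf U ^ 2 * ‖q‖ ^ 2 :=
            mul_pos (mul_pos (mul_pos hα0 (by linarith)) (pow_pos hγ 2)) (pow_pos hqpos 2)
          nlinarith
  exact lt_of_pow_lt_pow_left₀ 2 (norm_nonneg q) this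
end
end

section
/- Suppose that for a given n ≥ 0 the approximate solve satisfies ‖p̃∞^{(n+1)} − p̃^{(n+1)}‖_{R*TR} ≤ ε‖p̃∞^{(n+1)} − p̃^{(n)}‖_{R*TR}. Then ‖p̃∞^{(n+1)} − p̃^{(n+1)}‖_{R*TR} ≤ ε‖p̃∞^{(n)} − p̃^{(n)}‖_{R*TR} + ε‖q̃^{(n)} − q̃^{(n−1)}‖_{T⁻¹}. -/
noncomputable section
open scoped InnerProductSpace
open LinearMap

variable {V W : Type*}
  [NormedAddCommGroup V] [InnerProductSpace ℂ V] [FiniteDimensional ℂ V]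
  [NormedAddCommGroup W] [InnerProductSpace ℂ W] [FiniteDimensional ℂ W]

/-- The norm `‖x‖_{R*TR} := ⟨(R*TR)x, x⟩^{1/2}` on `V`. -/
def rtrNorm (T : W →ₗ[ℂ] W) (R : V →ₗ[ℂ] W) (x : V) : ℝ :=
  Real.sqrt (⟪(rtrOp T R) x, x⟫_ℂ).re

set_option linter.unusedSectionVars false
set_option linter.unusedVariables false

section Aux
variable (T : W →ₗ[ℂ] W) [Invertible T]

lemma re_symm (a b : W) : (⟪a, b⟫_ℂ).re = (⟪b, a⟫_ℂ).re := by
  rw [← inner_conj_symm a b, Complex.conj_re]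

lemma T_invOf_apply (p : W) : T ((⅟T) p) = p := by
  have h := mul_invOf_self T
  calc T ((⅟T) p) = (T * ⅟T) p := rfl
    _ = p := by rw [h]; rfl

lemma invOf_T_apply (p : W) : (⅟T) (T p) = p := by
  have h := invOf_mul_self T
  calc (⅟T) (T p) = (⅟T * T) p := rfl
    _ = p := by rw [h]; rfl

lemma T_sym (hTsa : adjoint T = T) (a b : W) : ⟪T a, b⟫_ℂ = ⟪a, T b⟫_ℂ := by
  rw [← LinearMap.adjoint_inner_left T b a, hTsa]

lemma tinv_symm (hTsa : adjoint T = T) (p q : W) :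
    ⟪(⅟T) p, q⟫_ℂ = (starRingEnd ℂ) ⟪(⅟T) q, p⟫_ℂ := by
  conv_lhs => rw [← T_invOf_apply T q]
  rw [← T_sym T hTsa, T_invOf_apply, ← inner_conj_symm]

lemma tinv_eq (hTsa : adjoint T = T) (p : W) :
    ⟪(⅟T) p, p⟫_ℂ = ⟪T ((⅟T) p), (⅟T) p⟫_ℂ := by
  rw [T_sym T hTsa, T_invOf_apply]

lemma tinv_re_nonneg (hTsa : adjoint T = T)
    (hTpos : ∀ w : W, w ≠ 0 → 0 < (⟪T w, w⟫_ℂ).re) (p : W) :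
    0 ≤ (⟪(⅟T) p, p⟫_ℂ).re := by
  rw [tinv_eq T hTsa]
  by_cases h : (⅟T) p = 0
  · simp [h]
  · exact (hTpos _ h).le

def tinvCore (hTsa : adjoint T = T)
    (hTpos : ∀ w : W, w ≠ 0 → 0 < (⟪T w, w⟫_ℂ).re) : InnerProductSpace.Core ℂ W where
  inner p q := ⟪(⅟T) p, q⟫_ℂ
  conj_inner_symm x y := (tinv_symm T hTsa x y).symm
  re_inner_nonneg x := tinv_re_nonneg T hTsa hTpos x
  add_left x y z := by simp [inner_add_left]
  smul_left x y r := by simp [inner_smul_left, mul_comm]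
  definite x h := by
    by_contra hx
    have h1 : (⅟T) x ≠ 0 := by
      intro h0
      apply hx
      rw [← T_invOf_apply T x, h0, map_zero]
    have h' : ⟪(⅟T) x, x⟫_ℂ = 0 := h
    have h2 := hTpos _ h1
    rw [← tinv_eq T hTsa, h'] at h2
    simp at h2

lemma tinvNorm_nonneg (p : W) : 0 ≤ tinvNorm T p := Real.sqrt_nonneg _

lemma tinvNorm_sq (hTsa : adjoint T = T)
    (hTpos : ∀ w : W, w ≠ 0 → 0 < (⟪T w, w⟫_ℂ).re) (p : W) :
    (⟪(⅟T) p, p⟫_ℂ).re = tinvNorm T p * tinvNorm T p :=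
  (Real.mul_self_sqrt (tinv_re_nonneg T hTsa hTpos p)).symm

lemma tinv_cs (hTsa : adjoint T = T)
    (hTpos : ∀ w : W, w ≠ 0 → 0 < (⟪T w, w⟫_ℂ).re) (p q : W) :
    (⟪(⅟T) p, q⟫_ℂ).re ≤ tinvNorm T p * tinvNorm T q := by
  have h := @InnerProductSpace.Core.inner_mul_inner_self_le ℂ W _ _ _
    (tinvCore T hTsa hTpos).toCore p q
  have h2 : ‖⟪(⅟T) p, q⟫_ℂ‖ * ‖⟪(⅟T) q, p⟫_ℂ‖ ≤
      (⟪(⅟T) p, p⟫_ℂ).re * (⟪(⅟T) q, q⟫_ℂ).re := h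
  have h3 : ‖⟪(⅟T) q, p⟫_ℂ‖ = ‖⟪(⅟T) p, q⟫_ℂ‖ := by
    rw [tinv_symm T hTsa q p]
    exact RCLike.norm_conj _
  rw [h3, tinvNorm_sq T hTsa hTpos p, tinvNorm_sq T hTsa hTpos q] at h2
  have h4 : (⟪(⅟T) p, q⟫_ℂ).re ≤ ‖⟪(⅟T) p, q⟫_ℂ‖ := Complex.re_le_norm _
  have h5 : ‖⟪(⅟T) p, q⟫_ℂ‖ ≤ tinvNorm T p * tinvNorm T q := by
    nlinarith [norm_nonneg (⟪(⅟T) p, q⟫_ℂ), tinvNorm_nonneg T p, tinvNorm_nonneg T q,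
      mul_nonneg (tinvNorm_nonneg T p) (tinvNorm_nonneg T q)]
  linarith

lemma tinv_triangle (hTsa : adjoint T = T)
    (hTpos : ∀ w : W, w ≠ 0 → 0 < (⟪T w, w⟫_ℂ).re) (a b : W) :
    tinvNorm T (a + b) ≤ tinvNorm T a + tinvNorm T b := by
  have expand : (⟪(⅟T) (a + b), a + b⟫_ℂ).re
      = (⟪(⅟T) a, a⟫_ℂ).re + (⟪(⅟T) a, b⟫_ℂ).re + (⟪(⅟T) b, a⟫_ℂ).re + (⟪(⅟T) b, b⟫_ℂ).re := by
    rw [map_add, inner_add_left, inner_add_right, inner_add_right]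
    simp
    ring
  have csab := tinv_cs T hTsa hTpos a b
  have csba := tinv_cs T hTsa hTpos b a
  have hle : (⟪(⅟T) (a + b), a + b⟫_ℂ).re ≤ (tinvNorm T a + tinvNorm T b) ^ 2 := by
    rw [expand, tinvNorm_sq T hTsa hTpos a, tinvNorm_sq T hTsa hTpos b]
    nlinarith
  calc tinvNorm T (a + b) = Real.sqrt (⟪(⅟T) (a + b), a + b⟫_ℂ).re := rfl
    _ ≤ Real.sqrt ((tinvNorm T a + tinvNorm T b) ^ 2) := Real.sqrt_le_sqrt hle
    _ = tinvNorm T a + tinvNorm T b := Real.sqrt_sq (by have := tinvNorm_nonneg T a; have := tinvNorm_nonneg T b; linarith)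

lemma rtrNorm_eq (hTsa : adjoint T = T) (R : V →ₗ[ℂ] W) (x : V) :
    rtrNorm T R x = tinvNorm T (T (R x)) := by
  have h : (⟪(rtrOp T R) x, x⟫_ℂ).re = (⟪(⅟T) (T (R x)), T (R x)⟫_ℂ).re := by
    rw [invOf_T_apply T]
    have h1 : (rtrOp T R) x = adjoint R (T (R x)) := rfl
    rw [h1, LinearMap.adjoint_inner_left]
    exact re_symm _ _
  unfold rtrNorm tinvNorm
  rw [h]

lemma solve_bound (hTsa : adjoint T = T)
    (hTpos : ∀ w : W, w ≠ 0 → 0 < (⟪T w, w⟫_ℂ).re)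
    (R : V →ₗ[ℂ] W) [Invertible (rtrOp T R)] (w : W) :
    tinvNorm T (T (R ((⅟(rtrOp T R)) (adjoint R w)))) ≤ tinvNorm T w := by
  set x := (⅟(rtrOp T R)) (adjoint R w) with hx
  have hAx : rtrOp T R x = adjoint R w := by
    have h := mul_invOf_self (rtrOp T R)
    calc rtrOp T R x = (rtrOp T R * ⅟(rtrOp T R)) (adjoint R w) := rfl
      _ = adjoint R w := by rw [h]; rfl
  set m := tinvNorm T (T (R x)) with hm
  have key : m * m = (⟪(⅟T) w, T (R x)⟫_ℂ).re := by
    rw [← tinvNorm_sq T hTsa hTpos (T (R x))]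
    rw [invOf_T_apply T]
    have lhs : (⟪R x, T (R x)⟫_ℂ).re = (⟪w, R x⟫_ℂ).re := by
      rw [re_symm]
      have e1 : ⟪T (R x), R x⟫_ℂ = ⟪adjoint R (T (R x)), x⟫_ℂ :=
        (LinearMap.adjoint_inner_left R x (T (R x))).symm
      have e2 : adjoint R (T (R x)) = adjoint R w := hAx
      rw [e1, e2, LinearMap.adjoint_inner_left]
    have rhs : ⟪(⅟T) w, T (R x)⟫_ℂ = ⟪w, R x⟫_ℂ := by
      rw [← T_sym T hTsa, T_invOf_apply]
    rw [rhs, lhs]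
  have cs := tinv_cs T hTsa hTpos w (T (R x))
  rw [← key] at cs
  have hm0 := tinvNorm_nonneg T (T (R x))
  rw [← hm] at hm0
  rcases eq_or_lt_of_le hm0 with h0 | h0
  · rw [← h0]; exact tinvNorm_nonneg T w
  · nlinarith

end Aux

/-- writing `p̃∞^{(n)} := (R*TR)⁻¹R*S q̃^{(n−1)}`, if for a given
`n ≥ 0` the approximate solve satisfies
`‖p̃∞^{(n+1)} − p̃^{(n+1)}‖_{R*TR} ≤ ε‖p̃∞^{(n+1)} − p̃^{(n)}‖_{R*TR}`, then
`‖p̃∞^{(n+1)} − p̃^{(n+1)}‖_{R*TR} ≤ ε‖p̃∞^{(n)} − p̃^{(n)}‖_{R*TR} + ε‖q̃^{(n)} − q̃^{(n−1)}‖_{T⁻¹}`.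
Here `qPrev = q̃^{(n−1)}`, `qCur = q̃^{(n)}`, `pCur = p̃^{(n)}`, `pNext = p̃^{(n+1)}`. -/
theorem pcg_recycle_estimate
    (T : W →ₗ[ℂ] W) [Invertible T]
    (hTsa : adjoint T = T)
    (hTpos : ∀ w : W, w ≠ 0 → 0 < (⟪T w, w⟫_ℂ).re)
    (R : V →ₗ[ℂ] W) (hR : Function.Injective R)
    [Invertible (rtrOp T R)]
    (S : W →ₗ[ℂ] W) (hS : ∀ w : W, tinvNorm T (S w) ≤ tinvNorm T w)
    (ε : ℝ) (hε : 0 ≤ ε)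
    (qPrev qCur : W) (pCur pNext : V)
    (hpcg : rtrNorm T R ((⅟(rtrOp T R)) (adjoint R (S qCur)) - pNext) ≤
      ε * rtrNorm T R ((⅟(rtrOp T R)) (adjoint R (S qCur)) - pCur)) :
    rtrNorm T R ((⅟(rtrOp T R)) (adjoint R (S qCur)) - pNext) ≤
      ε * rtrNorm T R ((⅟(rtrOp T R)) (adjoint R (S qPrev)) - pCur) +
      ε * tinvNorm T (qCur - qPrev) := by
  set u := (⅟(rtrOp T R)) (adjoint R (S qPrev)) - pCur with hu
  set v := (⅟(rtrOp T R)) (adjoint R (S (qCur - qPrev))) with hv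
  have hsplit : (⅟(rtrOp T R)) (adjoint R (S qCur)) - pCur = u + v := by
    rw [hu, hv]
    simp only [map_sub]
    abel
  have step : rtrNorm T R ((⅟(rtrOp T R)) (adjoint R (S qCur)) - pCur)
      ≤ rtrNorm T R u + tinvNorm T (qCur - qPrev) := by
    rw [rtrNorm_eq T hTsa R, hsplit, map_add, map_add]
    calc tinvNorm T (T (R u) + T (R v))
        ≤ tinvNorm T (T (R u)) + tinvNorm T (T (R v)) := tinv_triangle T hTsa hTpos _ _
      _ ≤ rtrNorm T R u + tinvNorm T (qCur - qPrev) := by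
          apply add_le_add
          · rw [rtrNorm_eq T hTsa R]
          · exact le_trans (solve_bound T hTsa hTpos R _) (hS _)
  calc rtrNorm T R ((⅟(rtrOp T R)) (adjoint R (S qCur)) - pNext)
      ≤ ε * rtrNorm T R ((⅟(rtrOp T R)) (adjoint R (S qCur)) - pCur) := hpcg
    _ ≤ ε * (rtrNorm T R u + tinvNorm T (qCur - qPrev)) :=
        mul_le_mul_of_nonneg_left step hε
    _ = ε * rtrNorm T R u + ε * tinvNorm T (qCur - qPrev) := mul_add ε _ _
end
end
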